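/- arXiv:2307.02772 — 7 statements merged into one kernel-verified Lean document; each statement's English description precedes it below -/
import Mathlib

section
/- Let lg denote the function lg t = max{log₂ t, 0} on the reals. Let x, y, a, b be real numbers with x > y > 0, a ≥ 0, and b ≥ 0. Then lg(x/2^b) − lg(y/2^b) ≤ (2/2^{a+b})·(x − y) + a. -/
/-- `lg t = max (log₂ t) 0`. -/
noncomputable def lg (t : ℝ) : ℝ := max (Real.logb 2 t) 0

lemma logb_le_two_mul_sub_one (u : ℝ) (hu : 1 ≤ u) : Real.logb 2 u ≤ 2 * (u - 1) := by
  have h1 : Real.log u ≤ u - 1 := Real.log_le_sub_one_of_pos (by linarith)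
  have h2 : (0.6931471803 : ℝ) < Real.log 2 := Real.log_two_gt_d9
  rw [Real.logb, div_le_iff₀ (by linarith)]
  nlinarith

lemma key (X Y a : ℝ) (hXY : X > Y) (hY : Y > 0) (ha : a ≥ 0) :
    lg X - lg Y ≤ (2 / 2 ^ a) * (X - Y) + a := by
  have hX0 : X > 0 := lt_trans hY hXY
  have hpa : (0:ℝ) < 2 ^ a := Real.rpow_pos_of_pos (by norm_num) a
  have h2a : (1:ℝ) ≤ 2 ^ a := Real.one_le_rpow (by norm_num) ha
  have hlgY0 : 0 ≤ lg Y := le_max_right _ _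
  by_cases hX : X ≤ 2 ^ a
  · have hlogX : Real.logb 2 X ≤ a :=
      (Real.logb_le_iff_le_rpow (by norm_num) hX0).mpr hX
    have hlgX : lg X ≤ a := max_le hlogX ha
    have : 0 ≤ (2 / 2 ^ a) * (X - Y) :=
      mul_nonneg (by positivity) (by linarith)
    linarith
  · push_neg at hX
    have hX1 : (1:ℝ) < X := lt_of_le_of_lt h2a hX
    have hlgX : lg X = Real.logb 2 X := max_eq_left (Real.logb_nonneg (by norm_num) hX1.le)
    by_cases hYa : 2 ^ a ≤ Y
    · have hY1 : (1:ℝ) ≤ Y := le_trans h2a hYa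
      have hlgYe : lg Y = Real.logb 2 Y := max_eq_left (Real.logb_nonneg (by norm_num) hY1)
      have hdiv : (1:ℝ) ≤ X / Y := (one_le_div hY).mpr hXY.le
      have h := logb_le_two_mul_sub_one (X / Y) hdiv
      rw [Real.logb_div (by linarith) (by linarith)] at h
      have h2 : 2 * (X / Y - 1) ≤ (2 / 2 ^ a) * (X - Y) := by
        have e : 2 * (X / Y - 1) = 2 * (X - Y) / Y := by field_simp
        have e2 : (2 / 2 ^ a) * (X - Y) = 2 * (X - Y) / 2 ^ a := by ring
        rw [e, e2]
        apply div_le_div_of_nonneg_left (by linarith) hpa hYa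
      rw [hlgX, hlgYe]
      linarith
    · push_neg at hYa
      have h := logb_le_two_mul_sub_one (X / 2 ^ a) ((one_le_div hpa).mpr hX.le)
      rw [Real.logb_div (by linarith) (by linarith)] at h
      rw [Real.logb_rpow (by norm_num) (by norm_num)] at h
      have h2 : 2 * (X / 2 ^ a - 1) ≤ (2 / 2 ^ a) * (X - Y) := by
        have e : 2 * (X / 2 ^ a - 1) = (2 / 2 ^ a) * (X - 2 ^ a) := by
          field_simp
        rw [e]
        apply mul_le_mul_of_nonneg_left (by linarith) (by positivity)
      rw [hlgX]
      linarith

/-- Lemma 6.3(ii): for reals `x > y > 0`, `a ≥ 0`, `b ≥ 0`,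
`lg(x/2^b) − lg(y/2^b) ≤ (2/2^(a+b))·(x − y) + a`. -/
theorem stmt_1 (x y a b : ℝ) (hxy : x > y) (hy : y > 0) (ha : a ≥ 0) (hb : b ≥ 0) :
    lg (x / 2 ^ b) - lg (y / 2 ^ b) ≤ (2 / 2 ^ (a + b)) * (x - y) + a := by
  have hpb : (0:ℝ) < 2 ^ b := Real.rpow_pos_of_pos (by norm_num) b
  have hXY : x / 2 ^ b > y / 2 ^ b := by gcongr
  have hY : y / 2 ^ b > 0 := div_pos hy hpb
  have h := key (x / 2 ^ b) (y / 2 ^ b) a hXY hY ha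
  have heq : (2 / 2 ^ a) * (x / 2 ^ b - y / 2 ^ b) = (2 / 2 ^ (a + b)) * (x - y) := by
    rw [Real.rpow_add (by norm_num)]
    have hpa : (0:ℝ) < 2 ^ a := Real.rpow_pos_of_pos (by norm_num) a
    field_simp
  rw [← heq]
  exact h
end

section
/- Let x, y, z be real numbers with 0 < z < y < x. Suppose log₂(x/y) > 1 and log₂(y/z) > 1. If log₂(log₂(x/z)) − log₂(log₂(x/y)) < 1, then log₂(log₂(y/z)) ≤ log₂(log₂(x/z)) − 1. -/
/-- Numerical core of Lemma 6.11: if `0 < z < y < x`, `log₂(x/y) > 1`, `log₂(y/z) > 1`,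
and `log₂ log₂ (x/z) − log₂ log₂ (x/y) < 1`, then
`log₂ log₂ (y/z) ≤ log₂ log₂ (x/z) − 1`. -/
theorem stmt_6 (x y z : ℝ) (hz : 0 < z) (hzy : z < y) (hyx : y < x)
    (h1 : 1 < Real.logb 2 (x / y)) (h2 : 1 < Real.logb 2 (y / z))
    (h3 : Real.logb 2 (Real.logb 2 (x / z)) - Real.logb 2 (Real.logb 2 (x / y)) < 1) :
    Real.logb 2 (Real.logb 2 (y / z)) ≤ Real.logb 2 (Real.logb 2 (x / z)) - 1 := by
  set A := Real.logb 2 (x / y) with hA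
  set B := Real.logb 2 (y / z) with hB
  have hy : 0 < y := hz.trans hzy
  have hx : 0 < x := hy.trans hyx
  have hxy : (0:ℝ) < x / y := div_pos hx hy
  have hyz : (0:ℝ) < y / z := by positivity
  have hsplit : Real.logb 2 (x / z) = A + B := by
    rw [hA, hB, ← Real.logb_mul (ne_of_gt hxy) (ne_of_gt hyz)]
    congr 1
    field_simp
  have hApos : (0:ℝ) < A := lt_trans one_pos h1
  have hBpos : (0:ℝ) < B := lt_trans one_pos h2
  have hCpos : (0:ℝ) < A + B := by linarith
  rw [hsplit] at h3 ⊢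
  have h2A : Real.logb 2 (2 * A) = 1 + Real.logb 2 A := by
    rw [Real.logb_mul (by norm_num) (ne_of_gt hApos), Real.logb_self_eq_one] <;> norm_num
  have hlt : Real.logb 2 (A + B) < Real.logb 2 (2 * A) := by rw [h2A]; linarith
  have hCA : A + B < 2 * A :=
    (Real.logb_lt_logb_iff (b := 2) (by norm_num) hCpos (by positivity)).mp hlt
  have hBA : B < A := by linarith
  have h2B : Real.logb 2 (2 * B) = 1 + Real.logb 2 B := by
    rw [Real.logb_mul (by norm_num) (ne_of_gt hBpos), Real.logb_self_eq_one] <;> norm_num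
  have : Real.logb 2 (2 * B) ≤ Real.logb 2 (A + B) :=
    Real.logb_le_logb_of_le (b := 2) (by norm_num) (by positivity) (by linarith)
  rw [h2B] at this
  linarith
end

section
/- Let T be a finite binary tree whose nodes carry pairwise distinct labels from a linearly ordered type and which satisfies the symmetric-order (binary search tree) property. Let x be a label occurring in T. Then every edge of T that crosses the boundary of x lies on the path obtained by following the search path from the root of T to the node labeled x and then, if the node labeled x has a right child, appending the edge from that node to its right child. -/
/-- Finite binary trees with labeled nodes. -/
inductive BTree (α : Type*) where
  | leaf : BTree α
  | node : BTree α → α → BTree α → BTree α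

namespace BTree

variable {α : Type*}

/-- `x` is a label occurring in the tree. -/
def Mem : BTree α → α → Prop
  | .leaf, _ => False
  | .node l a r, x => x = a ∨ Mem l x ∨ Mem r x

/-- The label of the root, if the tree is nonempty. -/
def root? : BTree α → Option α
  | .leaf => none
  | .node _ a _ => some a

/-- The symmetric-order (binary search tree) property; with strict comparisons,
it forces all labels to be pairwise distinct. -/
def IsBST [LinearOrder α] : BTree α → Prop
  | .leaf => True
  | .node l a r =>
      (∀ y, Mem l y → y < a) ∧ (∀ y, Mem r y → a < y) ∧ IsBST l ∧ IsBST r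

/-- `(u, v)` is an edge of the tree: `v` labels a child of the node labeled `u`. -/
def IsEdge : BTree α → α → α → Prop
  | .leaf, _, _ => False
  | .node l a r, u, v =>
      (u = a ∧ l.root? = some v) ∨ (u = a ∧ r.root? = some v) ∨
        IsEdge l u v ∨ IsEdge r u v

/-- The search path from the root to the node labeled `x`, extended by the edge
to that node's right child if it exists. -/
def searchPath [LinearOrder α] : BTree α → α → List α
  | .leaf, _ => []
  | .node l a r, x =>
      if x < a then a :: searchPath l x
      else if a < x then a :: searchPath r x
      else a :: (match r.root? with | some b => [b] | none => [])

end BTree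


namespace BTree

theorem mem_of_edge [LinearOrder α] : ∀ (t : BTree α) (u v : α), t.IsEdge u v →
    t.Mem u ∧ t.Mem v
  | .leaf, u, v, h => h.elim
  | .node l a r, u, v, h => by
    rcases h with ⟨rfl, h⟩ | ⟨rfl, h⟩ | h | h
    · cases l with
      | leaf => simp [root?] at h
      | node ll b lr =>
        simp only [root?, Option.some.injEq] at h
        subst h
        exact ⟨Or.inl rfl, Or.inr (Or.inl (Or.inl rfl))⟩
    · cases r with
      | leaf => simp [root?] at h
      | node rl b rr =>
        simp only [root?, Option.some.injEq] at h
        subst h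
        exact ⟨Or.inl rfl, Or.inr (Or.inr (Or.inl rfl))⟩
    · obtain ⟨h1, h2⟩ := mem_of_edge l u v h
      exact ⟨Or.inr (Or.inl h1), Or.inr (Or.inl h2)⟩
    · obtain ⟨h1, h2⟩ := mem_of_edge r u v h
      exact ⟨Or.inr (Or.inr h1), Or.inr (Or.inr h2)⟩

theorem searchPath_cons [LinearOrder α] (l r : BTree α) (a : α) (x : α) :
    ∃ s, (BTree.node l a r).searchPath x = a :: s := by
  unfold searchPath
  split_ifs <;> exact ⟨_, rfl⟩

theorem searchPath_root [LinearOrder α] (t : BTree α) (b x : α)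
    (h : t.root? = some b) : ∃ s, t.searchPath x = b :: s := by
  cases t with
  | leaf => simp [root?] at h
  | node l a r =>
    simp only [root?, Option.some.injEq] at h
    subst h
    exact searchPath_cons l r a x

end BTree

/-- Lemma 7.1 (first assertion): in a binary search tree `T` containing a label `x`,
every edge of `T` crossing the boundary of `x` (one endpoint `≤ x`, the other `> x`)
lies on the search path from the root to `x`, extended by the edge to the right child
of `x` if it exists. -/
theorem stmt_7 {α : Type*} [LinearOrder α] (T : BTree α) (hT : T.IsBST)
    (x : α) (hx : T.Mem x) (u v : α) (he : T.IsEdge u v)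
    (hcross : (u ≤ x ∧ x < v) ∨ (v ≤ x ∧ x < u)) :
    [u, v] <:+: T.searchPath x := by
  induction T with
  | leaf => exact he.elim
  | node l a r ihl ihr =>
    obtain ⟨hla, har, hbl, hbr⟩ := hT
    rcases he with ⟨rfl, h⟩ | ⟨rfl, h⟩ | h | h
    · -- left child edge: v < a = u
      have hmv : l.Mem v := by
        cases l with
        | leaf => simp [BTree.root?] at h
        | node ll b lr =>
          simp only [BTree.root?, Option.some.injEq] at h
          exact Or.inl h.symm
      have hva : v < u := hla v hmv
      rcases hcross with ⟨hux, hxv⟩ | ⟨hvx, hxu⟩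
      · exact absurd (lt_of_le_of_lt hux (hxv.trans hva)) (lt_irrefl _)
      · -- x < u, go left
        have hxa : x < u := hxu
        obtain ⟨s, hs⟩ := BTree.searchPath_root l v x h
        show [u, v] <:+: BTree.searchPath (BTree.node l u r) x
        unfold BTree.searchPath
        rw [if_pos hxa, hs]
        exact ⟨[], s, rfl⟩
    · -- right child edge: a = u < v
      have hmv : r.Mem v := by
        cases r with
        | leaf => simp [BTree.root?] at h
        | node rl b rr =>
          simp only [BTree.root?, Option.some.injEq] at h
          exact Or.inl h.symm
      have hav : u < v := har v hmv
      rcases hcross with ⟨hux, hxv⟩ | ⟨hvx, hxu⟩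
      · -- a ≤ x < v
        show [u, v] <:+: BTree.searchPath (BTree.node l u r) x
        rcases lt_or_eq_of_le hux with hax | rfl
        · have hxr : r.Mem x := by
            rcases hx with rfl | hx | hx
            · exact absurd hax (lt_irrefl _)
            · exact absurd (hla x hx) (not_lt_of_gt hax)
            · exact hx
          obtain ⟨s, hs⟩ := BTree.searchPath_root r v x h
          unfold BTree.searchPath
          rw [if_neg (not_lt_of_gt hax), if_pos hax, hs]
          exact ⟨[], s, rfl⟩
        · unfold BTree.searchPath
          rw [if_neg (lt_irrefl _), if_neg (lt_irrefl _), h]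
      · exact absurd (lt_of_le_of_lt hvx (hxu.trans hav)) (lt_irrefl _)
    · -- edge in left subtree
      obtain ⟨hmu, hmv⟩ := BTree.mem_of_edge l u v h
      have hua := hla u hmu
      have hva := hla v hmv
      have hxa : x < a := by
        rcases hcross with ⟨hux, hxv⟩ | ⟨hvx, hxu⟩
        · exact hxv.trans hva
        · exact hxu.trans hua
      have hxl : l.Mem x := by
        rcases hx with rfl | hx | hx
        · exact absurd hxa (lt_irrefl _)
        · exact hx
        · exact absurd (har x hx) (not_lt_of_gt hxa)
      have := ihl hbl hxl h
      show [u, v] <:+: BTree.searchPath (BTree.node l a r) x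
      unfold BTree.searchPath
      rw [if_pos hxa]
      exact this.trans (List.suffix_cons a _).isInfix
    · -- edge in right subtree
      obtain ⟨hmu, hmv⟩ := BTree.mem_of_edge r u v h
      have hau := har u hmu
      have hav := har v hmv
      have hax : a < x := by
        rcases hcross with ⟨hux, hxv⟩ | ⟨hvx, hxu⟩
        · exact hau.trans_le hux
        · exact hav.trans_le hvx
      have hxr : r.Mem x := by
        rcases hx with rfl | hx | hx
        · exact absurd hax (lt_irrefl _)
        · exact absurd (hla x hx) (not_lt_of_gt hax)
        · exact hx
      have := ihr hbr hxr h
      show [u, v] <:+: BTree.searchPath (BTree.node l a r) x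
      unfold BTree.searchPath
      rw [if_neg (not_lt_of_gt hax), if_pos hax]
      exact this.trans (List.suffix_cons a _).isInfix
end

section
/- Let V be a finite set with |V| = k + 1, let r ∈ V, and let p : V → V be a parent function with p(r) = r such that for every v ∈ V some iterate of p maps v to r, so that the pairs (p(v), v) for v ≠ r are the k edges of a rooted tree on V. Assume the tree is binary: every u ∈ V has at most 2 children, i.e., |{v ∈ V : v ≠ r and p(v) = u}| ≤ 2 (where for children of r we additionally require v ≠ r). Let M ⊆ V be an arbitrary set of marked nodes, and call an edge (p(v), v) good if v ∈ M or p(v) ∉ M. Then the number of good edges is at least k/3 − 2/3. -/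
open Finset in
/-- Combinatorial core of Lemma 4.5: let `p` be the parent function of a rooted tree
with root `r` on `k+1` nodes in which every node has at most two children, and let
`M` be a set of marked nodes.  Calling an edge `(p v, v)` good if `v ∈ M` or
`p v ∉ M`, the number of good edges is at least `k/3 − 2/3`. -/
theorem stmt_9 {V : Type*} [Fintype V] [DecidableEq V] (k : ℕ)
    (hcard : Fintype.card V = k + 1) (r : V) (p : V → V) (hr : p r = r)
    (hreach : ∀ v : V, ∃ m : ℕ, p^[m] v = r)
    (hbin : ∀ u : V, (Finset.univ.filter (fun v => v ≠ r ∧ p v = u)).card ≤ 2)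
    (M : Finset V) :
    (k : ℝ) / 3 - 2 / 3 ≤
      ((Finset.univ.filter (fun v => v ≠ r ∧ (v ∈ M ∨ p v ∉ M))).card : ℝ) := by
  classical
  set G := Finset.univ.filter (fun v => v ≠ r ∧ (v ∈ M ∨ p v ∉ M)) with hG
  set B := Finset.univ.filter (fun v => v ≠ r ∧ v ∉ M ∧ p v ∈ M) with hB
  -- G and B partition the non-root vertices
  have hdisj : Disjoint G B := by
    rw [Finset.disjoint_left]
    intro v hv hv'
    simp only [hG, hB, Finset.mem_filter, Finset.mem_univ, true_and] at hv hv'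
    tauto
  have hunion : G ∪ B = Finset.univ.filter (fun v => v ≠ r) := by
    ext v
    simp only [hG, hB, Finset.mem_union, Finset.mem_filter, Finset.mem_univ, true_and]
    tauto
  have hne : (Finset.univ.filter (fun v => v ≠ r)).card = k := by
    have : Finset.univ.filter (fun v => v ≠ r) = Finset.univ.erase r := by
      ext v; simp [Finset.mem_erase]
    rw [this, Finset.card_erase_of_mem (Finset.mem_univ r), Finset.card_univ, hcard]; omega
  have hGB : G.card + B.card = k := by
    rw [← Finset.card_union_of_disjoint hdisj, hunion, hne]
  -- each bad edge has a marked parent; each marked node has ≤ 2 children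
  have hBle : B.card ≤ 2 * M.card := by
    have hsub : B ⊆ M.biUnion (fun u => Finset.univ.filter (fun v => v ≠ r ∧ p v = u)) := by
      intro v hv
      simp only [hB, Finset.mem_filter, Finset.mem_univ, true_and] at hv
      refine Finset.mem_biUnion.2 ⟨p v, hv.2.2, ?_⟩
      simp [hv.1]
    calc B.card ≤ (M.biUnion (fun u => Finset.univ.filter (fun v => v ≠ r ∧ p v = u))).card :=
          Finset.card_le_card hsub
      _ ≤ ∑ u ∈ M, (Finset.univ.filter (fun v => v ≠ r ∧ p v = u)).card :=
          Finset.card_biUnion_le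
      _ ≤ ∑ _u ∈ M, 2 := Finset.sum_le_sum (fun u _ => hbin u)
      _ = 2 * M.card := by rw [Finset.sum_const, smul_eq_mul, mul_comm]
  -- each marked non-root node gives a good edge
  have hMle : M.card ≤ G.card + 1 := by
    have hsub : M.erase r ⊆ G := by
      intro v hv
      rcases Finset.mem_erase.1 hv with ⟨hvr, hvM⟩
      simp only [hG, Finset.mem_filter, Finset.mem_univ, true_and]
      exact ⟨hvr, Or.inl hvM⟩
    have h1 : M ⊆ insert r (M.erase r) := by
      intro v hv
      by_cases hvr : v = r
      · simp [hvr]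
      · exact Finset.mem_insert_of_mem (Finset.mem_erase.2 ⟨hvr, hv⟩)
    calc M.card ≤ (insert r (M.erase r)).card := Finset.card_le_card h1
      _ ≤ (M.erase r).card + 1 := Finset.card_insert_le _ _
      _ ≤ G.card + 1 := by
          exact Nat.add_le_add_right (Finset.card_le_card hsub) 1
  have hk : k ≤ 3 * G.card + 2 := by omega
  have := (Nat.cast_le (α := ℝ)).2 hk
  push_cast at this
  linarith
end

section
/- Let V be a finite set with |V| = k + 1, let r ∈ V, and let p : V → V be a parent function with p(r) = r such that for every v ∈ V some iterate of p maps v to r, so that the pairs (p(v), v) for v ≠ r are the k edges of a rooted tree on V. Let P be a collection of ⌊(k+1)/2⌋ pairwise disjoint two-element subsets of V such that every {a, b} ∈ P is an edge of the tree (p(a) = b or p(b) = a). Let M ⊆ V be an arbitrary set of marked nodes, and call an edge (p(v), v) good if v ∈ M or p(v) ∉ M. Then the number of good edges is at least k/2 − 1. -/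
open Finset in
/-- Combinatorial core of Lemma 4.3: let `p` be the parent function of a rooted tree
with root `r` on `k+1` nodes, and let `P` be a collection of `⌊(k+1)/2⌋` pairwise
disjoint two-element subsets of the nodes, each of which is an edge of the tree.
Let `M` be a set of marked nodes, and call an edge `(p v, v)` good if `v ∈ M` or
`p v ∉ M`.  Then the number of good edges is at least `k/2 − 1`. -/
theorem stmt_10 {V : Type*} [Fintype V] [DecidableEq V] (k : ℕ)
    (hcard : Fintype.card V = k + 1) (r : V) (p : V → V) (hr : p r = r)
    (hreach : ∀ v : V, ∃ m : ℕ, p^[m] v = r)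
    (P : Finset (Finset V)) (hPcard : P.card = (k + 1) / 2)
    (hdisj : (P : Set (Finset V)).PairwiseDisjoint id)
    (hpair : ∀ e ∈ P, e.card = 2)
    (hedge : ∀ e ∈ P, ∃ a b : V, e = {a, b} ∧ (p a = b ∨ p b = a))
    (M : Finset V) :
    (k : ℝ) / 2 - 1 ≤
      ((Finset.univ.filter (fun v => v ≠ r ∧ (v ∈ M ∨ p v ∉ M))).card : ℝ) := by
  classical
  set G := Finset.univ.filter (fun v => v ≠ r ∧ (v ∈ M ∨ p v ∉ M)) with hG
  set B := Finset.univ.filter (fun v => v ≠ r ∧ (v ∉ M ∧ p v ∈ M)) with hBdef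
  -- good + bad = k
  have hGB : G.card + B.card = k := by
    have h1 : (Finset.univ.filter (· ≠ r)).card = k := by
      rw [Finset.filter_ne', Finset.card_erase_of_mem (Finset.mem_univ r),
        Finset.card_univ, hcard]
      rfl
    have h2 := Finset.card_filter_add_card_filter_not
      (s := Finset.univ.filter (· ≠ r)) (p := fun v => v ∈ M ∨ p v ∉ M)
    rw [Finset.filter_filter, Finset.filter_filter, h1] at h2
    rw [← h2]
    congr 1
    rw [hBdef]
    congr 1
    apply Finset.filter_congr
    intro v _
    by_cases hv : v ∈ M <;> by_cases hpv : p v ∈ M <;> simp [hv, hpv]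
  -- covered nodes
  set S := P.biUnion id with hSdef
  have hdisj' : ∀ e ∈ P, ∀ f ∈ P, e ≠ f → Disjoint (id e) (id f) := by
    intro e he f hf hef
    exact hdisj he hf hef
  have hScard : S.card = 2 * P.card := by
    rw [hSdef, Finset.card_biUnion hdisj']
    simp only [id_eq]
    rw [Finset.sum_congr rfl (fun e he => hpair e he), Finset.sum_const, smul_eq_mul,
      mul_comm]
  have hSle : S.card ≤ k + 1 := by
    have := Finset.card_le_card (Finset.subset_univ S)
    rwa [Finset.card_univ, hcard] at this
  -- each pair contains at most one bad node
  have hone : ∀ e ∈ P, (e ∩ B).card ≤ 1 := by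
    intro e he
    rw [Finset.card_le_one]
    intro a ha b hb
    by_contra hab
    obtain ⟨x, y, hxy, hp⟩ := hedge e he
    simp only [Finset.mem_inter, hBdef, Finset.mem_filter, Finset.mem_univ,
      true_and] at ha hb
    obtain ⟨hae, _, haM, hpaM⟩ := ha
    obtain ⟨hbe, _, hbM, hpbM⟩ := hb
    rw [hxy, Finset.mem_insert, Finset.mem_singleton] at hae hbe
    rcases hae with rfl | rfl <;> rcases hbe with rfl | rfl <;>
      rcases hp with hp | hp <;> simp_all
  -- bad nodes inside S: at most one per pair
  have hBS : (B ∩ S).card ≤ P.card := by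
    have hsub : B ∩ S ⊆ P.biUnion (fun e => e ∩ B) := by
      intro v hv
      rw [Finset.mem_inter] at hv
      obtain ⟨hvB, hvS⟩ := hv
      rw [hSdef, Finset.mem_biUnion] at hvS
      obtain ⟨e, he, hve⟩ := hvS
      rw [Finset.mem_biUnion]
      exact ⟨e, he, Finset.mem_inter.mpr ⟨hve, hvB⟩⟩
    calc (B ∩ S).card ≤ (P.biUnion (fun e => e ∩ B)).card := Finset.card_le_card hsub
      _ ≤ ∑ e ∈ P, (e ∩ B).card := Finset.card_biUnion_le
      _ ≤ ∑ _e ∈ P, 1 := Finset.sum_le_sum hone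
      _ = P.card := by simp
  -- bad nodes outside S
  have hBout : (B \ S).card ≤ (k + 1) - S.card := by
    have hsub : B \ S ⊆ Finset.univ \ S := by
      intro v hv
      rw [Finset.mem_sdiff] at hv ⊢
      exact ⟨Finset.mem_univ v, hv.2⟩
    calc (B \ S).card ≤ (Finset.univ \ S).card := Finset.card_le_card hsub
      _ = (k + 1) - S.card := by
          rw [Finset.card_sdiff_of_subset (Finset.subset_univ S), Finset.card_univ, hcard]
  have hBcard : B.card ≤ P.card + ((k + 1) - S.card) := by
    rw [← Finset.card_inter_add_card_sdiff B S]
    exact Nat.add_le_add hBS hBout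
  -- conclude
  have hkey : k ≤ 2 * G.card + 2 := by omega
  have : (k : ℝ) ≤ 2 * (G.card : ℝ) + 2 := by exact_mod_cast hkey
  linarith
end

section
/- Consider leftmost locally maximum linking on a list of m ≥ 1 roots with pairwise distinct keys from a linearly ordered type: while more than one root remains, find the leftmost root v on the current list whose key is at least the key of each of its (one or two) neighbors; if v has a left neighbor and either v has no right neighbor or the left neighbor's key is at least the right neighbor's key, then the left neighbor u wins a right link with v and v is removed from the list; otherwise the right neighbor w of v wins a left link with v and v is removed from the list. Then, over the entire process until one root remains, each root wins at most one left link and at most one right link. -/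
/-- One step of leftmost locally maximum linking on a list of roots with distinct
keys.  `LLMStep l (win, lose, isLeft) l'` means: `lose` is the leftmost root of `l`
whose key is at least the key of each of its neighbors (equivalently, the prefix of
`l` up to `lose` is strictly increasing and the next root, if any, is smaller);
`win` is the neighbor that wins the link (the left neighbor wins a right link,
coded `isLeft = false`, when it exists and its key is at least that of the right
neighbor or there is no right neighbor; otherwise the right neighbor wins a left
link, coded `isLeft = true`); and `l'` is `l` with `lose` removed. -/
inductive LLMStep {α : Type*} [LinearOrder α] : List α → α × α × Bool → List α → Prop
  /-- The right neighbor `w` of the leftmost local maximum `v` wins a left link. -/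
  | left (A : List α) (v w : α) (B : List α)
      (hA : (A ++ [v]).Chain' (· < ·))
      (hw : w < v)
      (hcase : A = [] ∨ ∃ u, A.getLast? = some u ∧ u < w) :
      LLMStep (A ++ v :: w :: B) (w, v, true) (A ++ w :: B)
  /-- The left neighbor `u` of the leftmost local maximum `v` wins a right link. -/
  | right (A : List α) (u v : α) (B : List α)
      (hA : (A ++ [u, v]).Chain' (· < ·))
      (hB : ∀ w ∈ B.head?, w < u) :
      LLMStep (A ++ u :: v :: B) (u, v, false) (A ++ u :: B)

namespace LLMAux
set_option linter.unusedSectionVars false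
variable {α : Type*} [LinearOrder α]

/-- `x` and `y` are adjacent (in this order) in `l`. -/
def Adj (l : List α) (x y : α) : Prop := ∃ s t, l = s ++ x :: y :: t

lemma adj_mem_left {l : List α} {x y : α} (h : Adj l x y) : x ∈ l := by
  obtain ⟨s, t, rfl⟩ := h; simp

lemma adj_mem_right {l : List α} {x y : α} (h : Adj l x y) : y ∈ l := by
  obtain ⟨s, t, rfl⟩ := h; simp

@[simp] lemma adj_nil {x y : α} : ¬ Adj ([] : List α) x y := by
  rintro ⟨s, t, h⟩; simp at h

lemma adj_cons {c : α} {L : List α} {x y : α} :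
    Adj (c :: L) x y ↔ (c = x ∧ L.head? = some y) ∨ Adj L x y := by
  constructor
  · rintro ⟨s, t, h⟩
    cases s with
    | nil =>
      simp only [List.nil_append, List.cons.injEq] at h
      exact Or.inl ⟨h.1, by rw [h.2]; rfl⟩
    | cons a s =>
      simp only [List.cons_append, List.cons.injEq] at h
      exact Or.inr ⟨s, t, h.2⟩
  · rintro (⟨rfl, h⟩ | ⟨s, t, rfl⟩)
    · cases L with
      | nil => simp at h
      | cons b L' =>
        simp only [List.head?_cons, Option.some.injEq] at h
        subst h
        exact ⟨[], L', rfl⟩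
    · exact ⟨c :: s, t, rfl⟩

lemma adj_append {C D : List α} {x y : α} :
    Adj (C ++ D) x y ↔
      Adj C x y ∨ (C.getLast? = some x ∧ D.head? = some y) ∨ Adj D x y := by
  induction C with
  | nil => simp
  | cons c C ih =>
    rw [List.cons_append, adj_cons, ih, adj_cons]
    cases C with
    | nil => simp
    | cons c' C' =>
      simp only [List.getLast?_cons_cons, List.cons_append, List.head?_cons]
      tauto

/-- after winning a right link, every right neighbour of `x` is smaller. -/
def RightOK (x : α) (l : List α) : Prop := ∀ y, Adj l x y → y < x

/-- after winning a left link, every left neighbour of `x` is smaller. -/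
def LeftOK (x : α) (l : List α) : Prop := ∀ y, Adj l y x → y < x

lemma getLast?_lt_of_chain' {A : List α} {v u : α}
    (hA : (A ++ [v]).Chain' (· < ·)) (hu : A.getLast? = some u) : u < v :=
  (List.isChain_append.mp hA).2.2 u hu v rfl

lemma rightOK_step {l l' : List α} {p : α × α × Bool} {x : α}
    (h : LLMStep l p l') (hx : RightOK x l) : RightOK x l' := by
  cases h with
  | left A v w B hA hw hcase =>
    intro y hadj
    rcases adj_append.mp hadj with h1 | ⟨h1, h2⟩ | h1
    · exact hx y (adj_append.mpr (Or.inl h1))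
    · have hxv : x < v := getLast?_lt_of_chain' hA h1
      have hvx : v < x := hx v (adj_append.mpr (Or.inr (Or.inl ⟨h1, rfl⟩)))
      exact absurd hxv (asymm hvx)
    · rcases adj_cons.mp h1 with ⟨rfl, h2⟩ | h2
      · cases B with
        | nil => exact absurd h2 (by simp)
        | cons b B' =>
          rw [List.head?_cons, Option.some.injEq] at h2
          subst h2
          exact hx _ (adj_append.mpr (Or.inr (Or.inr (adj_cons.mpr (Or.inr
            (adj_cons.mpr (Or.inl ⟨rfl, rfl⟩)))))))
      · exact hx y (adj_append.mpr (Or.inr (Or.inr (adj_cons.mpr (Or.inr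
          (adj_cons.mpr (Or.inr h2)))))))
  | right A u v B hA hB =>
    intro y hadj
    rcases adj_append.mp hadj with h1 | ⟨h1, h2⟩ | h1
    · exact hx y (adj_append.mpr (Or.inl h1))
    · rw [List.head?_cons, Option.some.injEq] at h2
      subst h2
      exact hx _ (adj_append.mpr (Or.inr (Or.inl ⟨h1, rfl⟩)))
    · rcases adj_cons.mp h1 with ⟨rfl, h2⟩ | h2
      · exact hB y h2
      · exact hx y (adj_append.mpr (Or.inr (Or.inr (adj_cons.mpr (Or.inr
          (adj_cons.mpr (Or.inr h2)))))))

lemma leftOK_step {l l' : List α} {p : α × α × Bool} {x : α}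
    (h : LLMStep l p l') (hx : LeftOK x l) : LeftOK x l' := by
  cases h with
  | left A v w B hA hw hcase =>
    intro y hadj
    rcases adj_append.mp hadj with h1 | ⟨h1, h2⟩ | h1
    · exact hx y (adj_append.mpr (Or.inl h1))
    · rw [List.head?_cons, Option.some.injEq] at h2
      subst h2
      rcases hcase with rfl | ⟨u, hu, huw⟩
      · simp at h1
      · rw [h1] at hu
        injection hu with hu
        exact hu ▸ huw
    · rcases adj_cons.mp h1 with ⟨rfl, h2⟩ | h2
      · cases B with
        | nil => exact absurd h2 (by simp)
        | cons b B' =>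
          rw [List.head?_cons, Option.some.injEq] at h2
          subst h2
          exact hx _ (adj_append.mpr (Or.inr (Or.inr (adj_cons.mpr (Or.inr
            (adj_cons.mpr (Or.inl ⟨rfl, rfl⟩)))))))
      · exact hx y (adj_append.mpr (Or.inr (Or.inr (adj_cons.mpr (Or.inr
          (adj_cons.mpr (Or.inr h2)))))))
  | right A u v B hA hB =>
    intro y hadj
    rcases adj_append.mp hadj with h1 | ⟨h1, h2⟩ | h1
    · exact hx y (adj_append.mpr (Or.inl h1))
    · rw [List.head?_cons, Option.some.injEq] at h2
      subst h2
      exact hx y (adj_append.mpr (Or.inr (Or.inl ⟨h1, rfl⟩)))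
    · rcases adj_cons.mp h1 with ⟨rfl, h2⟩ | h2
      · -- x's previous left neighbour was v, and y = u < v
        have huv : u < v := List.isChain_pair.mp (List.isChain_append.mp hA).2.1
        have hvx : v < x := by
          cases B with
          | nil => exact absurd h2 (by simp)
          | cons b B' =>
            rw [List.head?_cons, Option.some.injEq] at h2
            subst h2
            exact hx v (adj_append.mpr (Or.inr (Or.inr (adj_cons.mpr (Or.inr
              (adj_cons.mpr (Or.inl ⟨rfl, rfl⟩)))))))
        exact lt_trans huv hvx
      · exact hx y (adj_append.mpr (Or.inr (Or.inr (adj_cons.mpr (Or.inr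
          (adj_cons.mpr (Or.inr h2)))))))

lemma rightOK_no_win {l l' : List α} {p : α × α × Bool} {x : α}
    (h : LLMStep l p l') (h1 : p.1 = x) (h2 : p.2.2 = false)
    (hx : RightOK x l) : False := by
  cases h with
  | left A v w B hA hw hcase => simp at h2
  | right A u v B hA hB =>
    obtain rfl : u = x := h1
    have huv : u < v := List.isChain_pair.mp (List.isChain_append.mp hA).2.1
    have hvu : v < u :=
      hx v (adj_append.mpr (Or.inr (Or.inr (adj_cons.mpr (Or.inl ⟨rfl, rfl⟩)))))
    exact absurd huv (asymm hvu)

lemma leftOK_no_win {l l' : List α} {p : α × α × Bool} {x : α}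
    (h : LLMStep l p l') (h1 : p.1 = x) (h2 : p.2.2 = true)
    (hx : LeftOK x l) : False := by
  cases h with
  | right A u v B hA hB => simp at h2
  | left A v w B hA hw hcase =>
    obtain rfl : w = x := h1
    have hvw : v < w :=
      hx v (adj_append.mpr (Or.inr (Or.inr (adj_cons.mpr (Or.inl ⟨rfl, rfl⟩)))))
    exact absurd hw (asymm hvw)

lemma rightOK_est {l l' : List α} {p : α × α × Bool} {x : α}
    (h : LLMStep l p l') (hnd : l.Nodup) (h1 : p.1 = x) (h2 : p.2.2 = false) :
    RightOK x l' := by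
  cases h with
  | left A v w B hA hw hcase => simp at h2
  | right A u v B hA hB =>
    obtain rfl : u = x := h1
    have hd := List.disjoint_of_nodup_append hnd
    have huA : u ∉ A := fun hmem => hd hmem (by simp)
    have hndr : (u :: v :: B).Nodup := (List.nodup_append.mp hnd).2.1
    have huB : u ∉ B := fun hb =>
      (List.nodup_cons.mp hndr).1 (List.mem_cons_of_mem _ hb)
    intro y hadj
    rcases adj_append.mp hadj with h3 | ⟨h3, h4⟩ | h3
    · exact absurd (adj_mem_left h3) huA
    · exact absurd (List.mem_of_mem_getLast? h3) huA
    · rcases adj_cons.mp h3 with ⟨_, h4⟩ | h4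
      · exact hB y h4
      · exact absurd (adj_mem_left h4) huB

lemma leftOK_est {l l' : List α} {p : α × α × Bool} {x : α}
    (h : LLMStep l p l') (hnd : l.Nodup) (h1 : p.1 = x) (h2 : p.2.2 = true) :
    LeftOK x l' := by
  cases h with
  | right A u v B hA hB => simp at h2
  | left A v w B hA hw hcase =>
    obtain rfl : w = x := h1
    have hd := List.disjoint_of_nodup_append hnd
    have hwA : w ∉ A := fun hmem => hd hmem (by simp)
    have hndr : (v :: w :: B).Nodup := (List.nodup_append.mp hnd).2.1
    have hwB : w ∉ B := (List.nodup_cons.mp (List.nodup_cons.mp hndr).2).1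
    intro y hadj
    rcases adj_append.mp hadj with h3 | ⟨h3, h4⟩ | h3
    · exact absurd (adj_mem_right h3) hwA
    · rcases hcase with rfl | ⟨u, hu, huw⟩
      · simp at h3
      · rw [h3] at hu
        injection hu with hu
        exact hu ▸ huw
    · rcases adj_cons.mp h3 with ⟨rfl, h4⟩ | h4
      · cases B with
        | nil => exact absurd h4 (by simp)
        | cons b B' =>
          rw [List.head?_cons, Option.some.injEq] at h4
          subst h4
          exact absurd (List.mem_cons_self) hwB
      · exact absurd (adj_mem_right h4) hwB

lemma step_nodup {l l' : List α} {p : α × α × Bool}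
    (h : LLMStep l p l') (hnd : l.Nodup) : l'.Nodup := by
  cases h with
  | left A v w B hA hw hcase =>
    exact (((List.sublist_cons_self v (w :: B)).append_left A)).nodup hnd
  | right A u v B hA hB =>
    exact ((((List.sublist_cons_self v B).cons₂ u)).append_left A).nodup hnd

end LLMAux

open Finset in
/-- Lemma 3.2: over an entire run of leftmost locally maximum linking from a list
of `m ≥ 1` roots with pairwise distinct keys down to a single root, each root wins
at most one left link and at most one right link. -/
theorem stmt_12 {α : Type*} [LinearOrder α] (m T : ℕ) (hm : 1 ≤ m)
    (state : ℕ → List α) (link : ℕ → α × α × Bool)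
    (hlen : (state 0).length = m) (hnodup : (state 0).Nodup)
    (hstep : ∀ t < T, LLMStep (state t) (link t) (state (t + 1)))
    (hend : (state T).length = 1) :
    ∀ x : α,
      ((Finset.range T).filter
          (fun t => (link t).1 = x ∧ (link t).2.2 = true)).card ≤ 1 ∧
      ((Finset.range T).filter
          (fun t => (link t).1 = x ∧ (link t).2.2 = false)).card ≤ 1 := by
  intro x
  have hnd : ∀ t, t ≤ T → (state t).Nodup := by
    intro t
    induction t with
    | zero => exact fun _ => hnodup
    | succ n ih =>
      intro h
      exact LLMAux.step_nodup (hstep n (by omega)) (ih (by omega))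
  have keyT : ∀ t₁ t₂ : ℕ, t₁ < t₂ → t₂ < T →
      (link t₁).1 = x → (link t₁).2.2 = true →
      (link t₂).1 = x → (link t₂).2.2 = true → False := by
    intro t₁ t₂ h12 h2T hx1 hb1 hx2 hb2
    have mono : ∀ s, t₁ < s → s ≤ t₂ → LLMAux.LeftOK x (state s) := by
      intro s
      induction s with
      | zero => exact fun h _ => absurd h (Nat.not_lt_zero _)
      | succ n ih =>
        intro hh1 hh2
        rcases Nat.lt_or_ge t₁ n with h | h
        · exact LLMAux.leftOK_step (hstep n (by omega)) (ih h (by omega))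
        · have hn : n = t₁ := by omega
          subst hn
          exact LLMAux.leftOK_est (hstep n (by omega)) (hnd n (by omega)) hx1 hb1
    exact LLMAux.leftOK_no_win (hstep t₂ h2T) hx2 hb2 (mono t₂ h12 le_rfl)
  have keyF : ∀ t₁ t₂ : ℕ, t₁ < t₂ → t₂ < T →
      (link t₁).1 = x → (link t₁).2.2 = false →
      (link t₂).1 = x → (link t₂).2.2 = false → False := by
    intro t₁ t₂ h12 h2T hx1 hb1 hx2 hb2
    have mono : ∀ s, t₁ < s → s ≤ t₂ → LLMAux.RightOK x (state s) := by
      intro s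
      induction s with
      | zero => exact fun h _ => absurd h (Nat.not_lt_zero _)
      | succ n ih =>
        intro hh1 hh2
        rcases Nat.lt_or_ge t₁ n with h | h
        · exact LLMAux.rightOK_step (hstep n (by omega)) (ih h (by omega))
        · have hn : n = t₁ := by omega
          subst hn
          exact LLMAux.rightOK_est (hstep n (by omega)) (hnd n (by omega)) hx1 hb1
    exact LLMAux.rightOK_no_win (hstep t₂ h2T) hx2 hb2 (mono t₂ h12 le_rfl)
  constructor
  · rw [Finset.card_le_one]
    intro a ha b hb
    simp only [Finset.mem_filter, Finset.mem_range] at ha hb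
    by_contra hne
    rcases Nat.lt_or_ge a b with h | h
    · exact keyT a b h hb.1 ha.2.1 ha.2.2 hb.2.1 hb.2.2
    · exact keyT b a (by omega) ha.1 hb.2.1 hb.2.2 ha.2.1 ha.2.2
  · rw [Finset.card_le_one]
    intro a ha b hb
    simp only [Finset.mem_filter, Finset.mem_range] at ha hb
    by_contra hne
    rcases Nat.lt_or_ge a b with h | h
    · exact keyF a b h hb.1 ha.2.1 ha.2.2 hb.2.1 hb.2.2
    · exact keyF b a (by omega) ha.1 hb.2.1 hb.2.2 ha.2.1 ha.2.2
end

section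
/- Let lg denote the function lg t = max{log₂ t, 0} on the reals. Let s, b, a be real numbers with 1 ≤ s ≤ b ≤ a. Then lg(lg(a/s)) − lg(lg(b/s)) ≤ 2·(log₂ a − log₂ b). -/
lemma log_two_half : (1/2 : ℝ) ≤ Real.log 2 := by
  have := Real.log_two_gt_d9
  linarith

lemma lg_key (β α : ℝ) (hβ : 0 ≤ β) (hβα : β ≤ α) :
    max (Real.logb 2 α) 0 - max (Real.logb 2 β) 0 ≤ 2 * (α - β) := by
  have hlog2 : (0:ℝ) < Real.log 2 := by linarith [log_two_half]
  rcases le_or_gt α 1 with hα | hα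
  · have h1 : Real.logb 2 α ≤ 0 := Real.logb_nonpos one_lt_two (le_trans hβ hβα) hα
    have : max (Real.logb 2 α) 0 = 0 := max_eq_right h1
    rw [this]
    have : (0:ℝ) ≤ max (Real.logb 2 β) 0 := le_max_right _ _
    linarith
  · have hαpos : (0:ℝ) < α := by linarith
    have hlα : 0 ≤ Real.logb 2 α := Real.logb_nonneg one_lt_two hα.le
    rw [max_eq_left hlα]
    rcases le_or_gt β 1 with hβ1 | hβ1
    · have hlβ : Real.logb 2 β ≤ 0 := Real.logb_nonpos one_lt_two hβ hβ1
      rw [max_eq_right hlβ]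
      -- logb 2 α ≤ 2(α-1) ≤ 2(α-β)
      have h1 : Real.log α ≤ α - 1 := Real.log_le_sub_one_of_pos hαpos
      have h2 : Real.logb 2 α = Real.log α / Real.log 2 := rfl
      rw [sub_zero, h2, div_le_iff₀ hlog2]
      have : (1:ℝ) ≤ 2 * Real.log 2 := by linarith [log_two_half]
      nlinarith [sub_nonneg.mpr hα.le]
    · have hβpos : (0:ℝ) < β := by linarith
      have hlβ : 0 ≤ Real.logb 2 β := Real.logb_nonneg one_lt_two hβ1.le
      rw [max_eq_left hlβ]
      have hdiff : Real.logb 2 α - Real.logb 2 β = Real.log (α/β) / Real.log 2 := by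
        rw [Real.log_div (ne_of_gt hαpos) (ne_of_gt hβpos)]
        unfold Real.logb
        ring
      rw [hdiff, div_le_iff₀ hlog2]
      have h1 : Real.log (α/β) ≤ α/β - 1 :=
        Real.log_le_sub_one_of_pos (div_pos hαpos hβpos)
      have h2 : α/β - 1 = (α - β)/β := by field_simp
      have h3 : (α - β)/β ≤ α - β := by
        apply div_le_self (by linarith) (by linarith)
      have : (1:ℝ) ≤ 2 * Real.log 2 := by linarith [log_two_half]
      nlinarith

/-- If `1 ≤ s ≤ b ≤ a`, then `lg lg (a/s) − lg lg (b/s) ≤ 2·(log₂ a − log₂ b)`: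
the increase of a rank `lg lg (mass/size)` when the mass steps up from `b` to `a`. -/
theorem stmt_15 (s b a : ℝ) (hs : 1 ≤ s) (hsb : s ≤ b) (hba : b ≤ a) :
    lg (lg (a / s)) - lg (lg (b / s)) ≤ 2 * (Real.logb 2 a - Real.logb 2 b) := by
  have hspos : (0:ℝ) < s := by linarith
  have hbpos : (0:ℝ) < b := by linarith
  have hapos : (0:ℝ) < a := by linarith
  have hbs : (1:ℝ) ≤ b / s := (one_le_div hspos).mpr hsb
  have has : b / s ≤ a / s := by gcongr
  have hβ : 0 ≤ Real.logb 2 (b / s) := Real.logb_nonneg one_lt_two hbs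
  have hα' : Real.logb 2 (b / s) ≤ Real.logb 2 (a / s) :=
    Real.logb_le_logb_of_le one_lt_two (by linarith) has
  have h1 : lg (b / s) = Real.logb 2 (b / s) := max_eq_left hβ
  have h2 : lg (a / s) = Real.logb 2 (a / s) := max_eq_left (le_trans hβ hα')
  have key := lg_key (Real.logb 2 (b / s)) (Real.logb 2 (a / s)) hβ hα'
  have hda : Real.logb 2 (a / s) = Real.logb 2 a - Real.logb 2 s :=
    Real.logb_div (ne_of_gt hapos) (ne_of_gt hspos)
  have hdb : Real.logb 2 (b / s) = Real.logb 2 b - Real.logb 2 s :=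
    Real.logb_div (ne_of_gt hbpos) (ne_of_gt hspos)
  rw [show lg (a / s) = Real.logb 2 (a / s) from h2,
     show lg (b / s) = Real.logb 2 (b / s) from h1]
  unfold lg
  linarith
end
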